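/- arXiv:1610.05944 — 3 statements merged into one kernel-verified Lean document; each statement's English description precedes it below -/
import Mathlib

section
/- If N is a finite normal subgroup of a group G, then t(G) = |N|·t(G/N), where t(X) is the maximal order of a finite subgroup of X. -/
/-- `t G` is the supremum of the orders of finite subgroups of `G` (`⊤ : ℕ∞` if unbounded). -/
noncomputable def maxFinSubgroupOrder (G : Type*) [Group G] : ℕ∞ :=
  ⨆ (H : Subgroup G) (_ : Finite H), (Nat.card H : ℕ∞)

section aux

variable {G : Type*} [Group G] (N : Subgroup G) [hN : N.Normal] [Finite N]

lemma card_le_aux (H : Subgroup G) [Finite H] :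
    Nat.card H ≤ Nat.card N * Nat.card (H.map (QuotientGroup.mk' N)) := by
  set f := QuotientGroup.mk' N with hf
  have hsurj := f.subgroupMap_surjective H
  have h1 : Nat.card H = Nat.card (H ⧸ (f.subgroupMap H).ker) * Nat.card (f.subgroupMap H).ker :=
    Subgroup.card_eq_card_quotient_mul_card_subgroup _
  have h2 : Nat.card (H ⧸ (f.subgroupMap H).ker) = Nat.card (H.map f) :=
    Nat.card_congr (QuotientGroup.quotientKerEquivOfSurjective _ hsurj).toEquiv
  have h3 : Nat.card (f.subgroupMap H).ker ≤ Nat.card N := by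
    have hmem : ∀ x : (f.subgroupMap H).ker, (x.1.1 : G) ∈ N := by
      intro x
      have hx := x.2
      rw [MonoidHom.mem_ker] at hx
      have : f x.1.1 = 1 := congrArg Subtype.val hx
      exact (QuotientGroup.eq_one_iff _).mp this
    refine Nat.card_le_card_of_injective (fun x => (⟨x.1.1, hmem x⟩ : N)) ?_
    intro x y h
    have h' : (⟨x.1.1, hmem x⟩ : N) = ⟨y.1.1, hmem y⟩ := h
    have hval := Subtype.ext_iff.mp h'
    exact Subtype.ext (Subtype.ext hval)
  calc Nat.card H = Nat.card (H.map f) * Nat.card (f.subgroupMap H).ker := by rw [h1, h2]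
    _ ≤ Nat.card (H.map f) * Nat.card N := Nat.mul_le_mul_left _ h3
    _ = Nat.card N * Nat.card (H.map f) := Nat.mul_comm _ _

lemma exists_comap (K : Subgroup (G ⧸ N)) [Finite K] :
    ∃ H : Subgroup G, Finite H ∧ Nat.card H = Nat.card N * Nat.card K := by
  set f := QuotientGroup.mk' N with hf
  set H := K.comap f with hH
  have hmap : H.map f = K :=
    Subgroup.map_comap_eq_self_of_surjective (QuotientGroup.mk'_surjective N) K
  have hsurj := f.subgroupMap_surjective H
  have hNle : N ≤ H := by
    intro n hn
    have h1 : f n = 1 := (QuotientGroup.eq_one_iff _).mpr hn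
    exact Subgroup.mem_comap.mpr (by rw [h1]; exact K.one_mem)
  have hker : (f.subgroupMap H).ker = N.subgroupOf H := by
    ext x
    rw [MonoidHom.mem_ker, Subgroup.mem_subgroupOf]
    constructor
    · intro hx
      have : f x.1 = 1 := congrArg Subtype.val hx
      exact (QuotientGroup.eq_one_iff _).mp this
    · intro hx
      apply Subtype.ext
      show f x.1 = 1
      exact (QuotientGroup.eq_one_iff _).mpr hx
  have hkerEquiv : (f.subgroupMap H).ker ≃ N := by
    rw [hker]; exact (Subgroup.subgroupOfEquivOfLe hNle).toEquiv
  have hquotEquiv : (H ⧸ (f.subgroupMap H).ker) ≃ K := by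
    refine ((QuotientGroup.quotientKerEquivOfSurjective _ hsurj).toEquiv).trans ?_
    rw [hmap]
  have hfinKer : Finite (f.subgroupMap H).ker := Finite.of_equiv N hkerEquiv.symm
  have hfinQuot : Finite (H ⧸ (f.subgroupMap H).ker) := Finite.of_equiv K hquotEquiv.symm
  have hfinH : Finite H :=
    Finite.of_equiv _ (Subgroup.groupEquivQuotientProdSubgroup (s := (f.subgroupMap H).ker)).symm
  refine ⟨H, hfinH, ?_⟩
  calc Nat.card H
      = Nat.card (H ⧸ (f.subgroupMap H).ker) * Nat.card (f.subgroupMap H).ker :=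
        Subgroup.card_eq_card_quotient_mul_card_subgroup _
    _ = Nat.card K * Nat.card N := by
        rw [Nat.card_congr hquotEquiv, Nat.card_congr hkerEquiv]
    _ = Nat.card N * Nat.card K := Nat.mul_comm _ _

end aux

theorem stmt_2 (G : Type*) [Group G] (N : Subgroup G) (hN : N.Normal) (hfin : Finite N) :
    maxFinSubgroupOrder G = (Nat.card N : ℕ∞) * maxFinSubgroupOrder (G ⧸ N) := by
  haveI := hN
  haveI := hfin
  have hN0 : (Nat.card N : ℕ∞) ≠ 0 := by
    have h0 : Nat.card N ≠ 0 := (Nat.card_pos (α := ↥N)).ne'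
    exact_mod_cast h0
  apply le_antisymm
  · refine iSup₂_le fun H hH => ?_
    haveI := hH
    have hKfin : Finite (H.map (QuotientGroup.mk' N)) := by
      have : ((H.map (QuotientGroup.mk' N) : Subgroup (G ⧸ N)) : Set (G ⧸ N)).Finite := by
        rw [Subgroup.coe_map]
        exact Set.Finite.image _ (Set.toFinite _)
      exact this
    calc (Nat.card H : ℕ∞)
        ≤ (Nat.card N : ℕ∞) * (Nat.card (H.map (QuotientGroup.mk' N)) : ℕ∞) := by
          rw [← Nat.cast_mul]
          exact_mod_cast card_le_aux N H
      _ ≤ (Nat.card N : ℕ∞) * maxFinSubgroupOrder (G ⧸ N) := by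
          apply mul_le_mul_right
          exact le_iSup₂_of_le (H.map (QuotientGroup.mk' N)) hKfin le_rfl
  · have hle : ∀ (K : Subgroup (G ⧸ N)), Finite K →
        (Nat.card N : ℕ∞) * (Nat.card K : ℕ∞) ≤ maxFinSubgroupOrder G := by
      intro K hK
      haveI := hK
      obtain ⟨H, hHfin, hcard⟩ := exists_comap N K
      haveI := hHfin
      refine le_iSup₂_of_le H hHfin ?_
      rw [← Nat.cast_mul, ← hcard]
    rcases eq_or_ne (maxFinSubgroupOrder (G ⧸ N)) ⊤ with htop | hne
    · rw [htop, ENat.mul_top hN0, top_le_iff]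
      rw [eq_top_iff, ← htop]
      refine iSup₂_le fun K hK => ?_
      haveI := hK
      refine le_trans ?_ (hle K hK)
      have h1 : 1 ≤ Nat.card N := Nat.card_pos (α := ↥N)
      exact le_mul_of_one_le_left' (by exact_mod_cast h1)
    · -- the sup is attained
      have heq : maxFinSubgroupOrder (G ⧸ N)
          = ⨆ p : {K : Subgroup (G ⧸ N) // Finite K}, (Nat.card p.1 : ℕ∞) := by
        rw [maxFinSubgroupOrder, iSup_subtype']
      haveI : Nonempty {K : Subgroup (G ⧸ N) // Finite K} :=
        ⟨⟨⊥, inferInstance⟩⟩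
      have hlt : (⨆ p : {K : Subgroup (G ⧸ N) // Finite K}, (Nat.card p.1 : ℕ∞)) < ⊤ := by
        rw [← heq]; exact lt_top_iff_ne_top.mpr hne
      obtain ⟨p, hp⟩ := ENat.exists_eq_iSup_of_lt_top hlt
      rw [heq, ← hp]
      haveI := p.2
      exact hle p.1 p.2
end

section
/- Let G = C₂ ≀ ℤ be the wreath product of the cyclic group of order 2 with ℤ, π : G → ℤ the projection onto the top group, and H_n = π⁻¹(nℤ). Then the torsion subgroup of the abelianization of H_n has order 2ⁿ. -/
namespace Stmt12

/-- The base group `B = ⊕_{ℤ} C₂` of the lamplighter group, written multiplicatively. -/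
abbrev B := Multiplicative (ℤ →₀ ZMod 2)

/-- The shift action of `ℤ` on `B`. -/
noncomputable def shiftHom : Multiplicative ℤ →* MulAut B :=
  MonoidHom.mk'
    (fun n => AddEquiv.toMultiplicative (Finsupp.domCongr (Equiv.addRight n.toAdd)))
    (by
      intro a b
      ext f
      simp [Equiv.addRight, Finsupp.equivMapDomain_apply]
      congr 1
      ring)

/-- The lamplighter group `G = C₂ ≀ ℤ`, the restricted wreath product. -/
abbrev Lamplighter := B ⋊[shiftHom] Multiplicative ℤ

/-- The projection `π : G → ℤ` onto the top group. -/
noncomputable def proj : Lamplighter →* Multiplicative ℤ := SemidirectProduct.rightHom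

/-- `H n = π⁻¹(nℤ)`. -/
noncomputable def Hsub (n : ℕ) : Subgroup Lamplighter :=
  Subgroup.comap proj (Subgroup.zpowers (Multiplicative.ofAdd (n : ℤ)))

-- basic lemmas
lemma shiftHom_apply (t : Multiplicative ℤ) (b : B) :
    shiftHom t b = Multiplicative.ofAdd (Finsupp.mapDomain (· + t.toAdd) b.toAdd) := by
  show Multiplicative.ofAdd (Finsupp.equivMapDomain (Equiv.addRight t.toAdd) b.toAdd) = _
  rw [Finsupp.equivMapDomain_eq_mapDomain]
  rfl

noncomputable def rhom (n : ℕ) : B →* Multiplicative (ZMod n →₀ ZMod 2) :=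
  AddMonoidHom.toMultiplicative (Finsupp.mapDomain.addMonoidHom (Int.cast : ℤ → ZMod n))

lemma rhom_apply (n : ℕ) (b : B) :
    rhom n b = Multiplicative.ofAdd (Finsupp.mapDomain (Int.cast : ℤ → ZMod n) b.toAdd) := rfl

lemma rhom_shift (n : ℕ) (k : ℤ) (b : B) :
    rhom n (shiftHom (Multiplicative.ofAdd (n * k)) b) = rhom n b := by
  rw [shiftHom_apply, rhom_apply, rhom_apply]
  congr 1
  show Finsupp.mapDomain _ (Finsupp.mapDomain _ _) = _
  rw [← Finsupp.mapDomain_comp]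
  congr 1
  ext x
  simp [Function.comp, ZMod.natCast_self]

-- membership
lemma ofAdd_n_zpow (n : ℕ) (k : ℤ) :
    (Multiplicative.ofAdd ((n : ℤ))) ^ k = Multiplicative.ofAdd ((n : ℤ) * k) := by
  rw [← ofAdd_zsmul, smul_eq_mul, mul_comm]

lemma mem_Hsub_iff (n : ℕ) (g : Lamplighter) :
    g ∈ Hsub n ↔ ∃ k : ℤ, g.right = Multiplicative.ofAdd ((n : ℤ) * k) := by
  simp only [Hsub, proj, Subgroup.mem_comap, Subgroup.mem_zpowers_iff, ofAdd_n_zpow,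
    SemidirectProduct.rightHom_eq_right]
  constructor
  · rintro ⟨k, hk⟩
    exact ⟨k, hk.symm⟩
  · rintro ⟨k, hk⟩
    exact ⟨k, hk.symm⟩


variable (n : ℕ)

noncomputable def phi [NeZero n] :
    Hsub n →* Multiplicative (ZMod n →₀ ZMod 2) × Multiplicative ℤ :=
  MonoidHom.mk'
    (fun x => (rhom n (x : Lamplighter).left,
      Multiplicative.ofAdd ((x : Lamplighter).right.toAdd / (n : ℤ)))) (by
    rintro ⟨x, hx⟩ ⟨y, hy⟩
    obtain ⟨k, hk⟩ := (mem_Hsub_iff n x).mp hx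
    obtain ⟨l, hl⟩ := (mem_Hsub_iff n y).mp hy
    have hn : (n : ℤ) ≠ 0 := by exact_mod_cast NeZero.ne n
    refine Prod.ext ?_ ?_
    · show rhom n ((x * y).left) = rhom n x.left * rhom n y.left
      rw [SemidirectProduct.mul_left, map_mul, hk, rhom_shift]
    · show Multiplicative.ofAdd ((x * y).right.toAdd / (n:ℤ)) = _
      rw [Prod.snd_mul, ← ofAdd_add]
      congr 1
      rw [SemidirectProduct.mul_right, hk, hl, toAdd_mul, toAdd_ofAdd, toAdd_ofAdd,
        ← mul_add, Int.mul_ediv_cancel_left _ hn, Int.mul_ediv_cancel_left _ hn,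
        Int.mul_ediv_cancel_left _ hn])

lemma phi_apply [NeZero n] (x : Hsub n) :
    phi n x = (rhom n (x : Lamplighter).left,
      Multiplicative.ofAdd ((x : Lamplighter).right.toAdd / (n : ℤ))) := rfl

/-- the generator `t^n` of the top part, as an element of `Hsub n`. -/
noncomputable def gEl : Hsub n :=
  ⟨SemidirectProduct.inr (Multiplicative.ofAdd (n : ℤ)),
    (mem_Hsub_iff n _).mpr ⟨1, by simp⟩⟩

/-- generator `δ_i` of the base, as an element of `Hsub n`. -/
noncomputable def deltaEl (i : ℤ) : Hsub n :=
  ⟨SemidirectProduct.inl (Multiplicative.ofAdd (Finsupp.single i (1 : ZMod 2))),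
    (mem_Hsub_iff n _).mpr ⟨0, by simp⟩⟩

lemma deltaEl_sq (i : ℤ) : (deltaEl n i) ^ 2 = 1 := by
  have : (Multiplicative.ofAdd (Finsupp.single i (1 : ZMod 2)) : B) ^ 2 = 1 := by
    rw [← ofAdd_nsmul, two_nsmul, ← Finsupp.single_add]
    have h2 : (1 : ZMod 2) + 1 = 0 := by decide
    rw [h2, Finsupp.single_zero, ofAdd_zero]
  apply Subtype.ext
  show ((deltaEl n i : Lamplighter)) ^ 2 = 1
  show (SemidirectProduct.inl _ : Lamplighter) ^ 2 = 1
  rw [← map_pow, this, map_one]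

noncomputable def psi2 : Multiplicative ℤ →* Abelianization (Hsub n) :=
  zpowersHom _ (Abelianization.of (gEl n))

noncomputable def psi1add : (ZMod n →₀ ZMod 2) →+ Additive (Abelianization (Hsub n)) :=
  Finsupp.liftAddHom (fun j => ZMod.lift 2
    ⟨zmultiplesHom _ (Additive.ofMul (Abelianization.of (deltaEl n (j.val : ℤ)))), by
      show (2 : ℤ) • Additive.ofMul (Abelianization.of (deltaEl n (j.val : ℤ))) = 0
      have h : (Abelianization.of (deltaEl n (j.val : ℤ))) ^ (2 : ℕ) = 1 := by
        rw [← map_pow, deltaEl_sq, map_one]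
      rw [two_smul, ← ofMul_mul, ← sq, h, ofMul_one]⟩)

noncomputable def psi : Multiplicative (ZMod n →₀ ZMod 2) × Multiplicative ℤ →*
    Abelianization (Hsub n) :=
  MonoidHom.coprod (AddMonoidHom.toMultiplicativeLeft (psi1add n)) (psi2 n)

noncomputable def psi1 : Multiplicative (ZMod n →₀ ZMod 2) →* Abelianization (Hsub n) :=
  AddMonoidHom.toMultiplicativeLeft (psi1add n)

lemma psi1_single (j : ZMod n) (c : ZMod 2) :
    psi1 n (Multiplicative.ofAdd (Finsupp.single j c)) =
      Abelianization.of (deltaEl n (j.val : ℤ)) ^ (c.val : ℤ) := by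
  show Additive.toMul (psi1add n (Finsupp.single j c)) = _
  have hc : ((c.val : ℤ) : ZMod 2) = c := by
    rw [Int.cast_natCast, ZMod.natCast_val, ZMod.cast_id]
  rw [psi1add, Finsupp.liftAddHom_apply_single]
  conv_lhs => rw [← hc]
  rw [ZMod.lift_coe]
  show Additive.toMul ((c.val : ℤ) •
    Additive.ofMul (Abelianization.of (deltaEl n (j.val : ℤ)))) = _
  rw [toMul_zsmul, toMul_ofMul]

/-- conjugation invariance in the abelianization. -/
lemma of_deltaEl_shift (r q : ℤ) :
    Abelianization.of (deltaEl n (r + (n : ℤ) * q)) = Abelianization.of (deltaEl n r) := by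
  set u : Hsub n := ⟨SemidirectProduct.inr (Multiplicative.ofAdd ((n : ℤ) * q)),
    (mem_Hsub_iff n _).mpr ⟨q, by simp only [SemidirectProduct.right_inr]⟩⟩ with hu
  have hconj : deltaEl n (r + (n : ℤ) * q) = u * deltaEl n r * u⁻¹ := by
    apply Subtype.ext
    show (SemidirectProduct.inl _ : Lamplighter) = _
    have := SemidirectProduct.inl_aut (φ := shiftHom)
      (Multiplicative.ofAdd ((n : ℤ) * q)) (Multiplicative.ofAdd (Finsupp.single r (1 : ZMod 2)))
    simp only [Subgroup.coe_mul, InvMemClass.coe_inv]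
    rw [show ((deltaEl n r : Hsub n) : Lamplighter) =
      SemidirectProduct.inl (Multiplicative.ofAdd (Finsupp.single r (1 : ZMod 2))) from rfl,
      ← map_inv, ← this]
    congr 1
    rw [shiftHom_apply]
    simp only [toAdd_ofAdd]
    rw [Finsupp.mapDomain_single]
  rw [hconj, map_mul, map_mul, map_inv, mul_comm, inv_mul_cancel_left]

noncomputable def ofB : B →* Abelianization (Hsub n) :=
  (Abelianization.of.comp (SemidirectProduct.inl.codRestrict (Hsub n)
    (fun b => (mem_Hsub_iff n _).mpr ⟨0, by simp⟩)))

lemma ofB_single (i : ℤ) :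
    ofB n (Multiplicative.ofAdd (Finsupp.single i (1 : ZMod 2))) =
      Abelianization.of (deltaEl n i) := rfl

lemma key_b [NeZero n] (b : B) : psi1 n (rhom n b) = ofB n b := by
  have : ∀ f : ℤ →₀ ZMod 2, psi1 n (rhom n (Multiplicative.ofAdd f)) =
      ofB n (Multiplicative.ofAdd f) := by
    intro f
    induction f using Finsupp.induction_linear with
    | zero => simp
    | add f g hf hg =>
        rw [ofAdd_add]
        show psi1 n (rhom n (Multiplicative.ofAdd f * Multiplicative.ofAdd g)) = _
        rw [map_mul, map_mul, map_mul, hf, hg]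
    | single a c =>
        have hc : c = 0 ∨ c = 1 := by revert c; decide
        rcases hc with rfl | rfl
        · simp
        · rw [rhom_apply, toAdd_ofAdd, Finsupp.mapDomain_single, psi1_single, ofB_single,
            show ((1 : ZMod 2)).val = 1 from rfl, Nat.cast_one, zpow_one]
          have h1 : ((((a : ZMod n)).val : ℤ)) + (n : ℤ) * (a / n) = a := by
            rw [ZMod.val_intCast]
            exact Int.emod_add_mul_ediv a n
          conv_rhs => rw [← h1]
          exact (of_deltaEl_shift n _ _).symm
  exact this b.toAdd

lemma multHom_ext {N : Type*} [Monoid N]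
    (F G : Multiplicative (ZMod n →₀ ZMod 2) →* N)
    (h : ∀ (j : ZMod n) (c : ZMod 2),
      F (Multiplicative.ofAdd (Finsupp.single j c)) =
        G (Multiplicative.ofAdd (Finsupp.single j c))) : F = G := by
  have : MonoidHom.toAdditiveRight F = MonoidHom.toAdditiveRight G := by
    apply Finsupp.addHom_ext
    intro j c
    exact congrArg Additive.ofMul (h j c)
  exact MonoidHom.toAdditiveRight.injective this

lemma psi_comp_phi [NeZero n] (h : Hsub n) :
    psi n (phi n h) = Abelianization.of h := by
  obtain ⟨k, hk⟩ := (mem_Hsub_iff n (h : Lamplighter)).mp h.2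
  have hn : (n : ℤ) ≠ 0 := by exact_mod_cast NeZero.ne n
  have hdiv : (h : Lamplighter).right.toAdd / (n : ℤ) = k := by
    rw [hk, toAdd_ofAdd, Int.mul_ediv_cancel_left _ hn]
  have hb : (⟨SemidirectProduct.inl (h : Lamplighter).left,
      (mem_Hsub_iff n _).mpr ⟨0, by
        rw [SemidirectProduct.right_inl, mul_zero, ofAdd_zero]⟩⟩ : Hsub n) * gEl n ^ k = h := by
    apply Subtype.ext
    rw [Subgroup.coe_mul, SubgroupClass.coe_zpow]
    show SemidirectProduct.inl (h : Lamplighter).left *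
      (SemidirectProduct.inr (Multiplicative.ofAdd ((n : ℤ))) : Lamplighter) ^ k = _
    rw [← map_zpow, ofAdd_n_zpow, ← hk]
    exact SemidirectProduct.inl_left_mul_inr_right _
  rw [phi_apply, psi, MonoidHom.coprod_apply, hdiv]
  show psi1 n _ * psi2 n _ = _
  rw [key_b, psi2, zpowersHom_apply, toAdd_ofAdd]
  conv_rhs => rw [← hb]
  rw [map_mul, map_zpow]
  rfl

lemma phi_deltaEl [NeZero n] (i : ℤ) :
    phi n (deltaEl n i) =
      (Multiplicative.ofAdd (Finsupp.single ((i : ZMod n)) (1 : ZMod 2)), 1) := by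
  rw [phi_apply]
  refine Prod.ext ?_ ?_
  · show rhom n (Multiplicative.ofAdd (Finsupp.single i (1 : ZMod 2))) = _
    rw [rhom_apply, toAdd_ofAdd, Finsupp.mapDomain_single]
  · show Multiplicative.ofAdd ((SemidirectProduct.inl _ : Lamplighter).right.toAdd / (n:ℤ)) = 1
    rw [SemidirectProduct.right_inl]
    show Multiplicative.ofAdd ((0 : ℤ) / (n : ℤ)) = 1
    rw [Int.zero_ediv, ofAdd_zero]

lemma lift_phi_psi1 [NeZero n] :
    (Abelianization.lift (phi n)).comp (psi1 n) = MonoidHom.inl _ _ := by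
  apply multHom_ext
  intro j c
  have hc : c = 0 ∨ c = 1 := by revert c; decide
  rw [MonoidHom.comp_apply, psi1_single, map_zpow, Abelianization.lift_apply_of, phi_deltaEl,
    MonoidHom.inl_apply]
  have hj : (((j.val : ℤ) : ZMod n)) = j := by
    rw [Int.cast_natCast, ZMod.natCast_val, ZMod.cast_id]
  rw [hj]
  refine Prod.ext ?_ ?_
  · have : (((Multiplicative.ofAdd (Finsupp.single j (1 : ZMod 2)),
        (1 : Multiplicative ℤ)) : Multiplicative (ZMod n →₀ ZMod 2) × Multiplicative ℤ)
          ^ (c.val : ℤ)).1 =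
        (Multiplicative.ofAdd (Finsupp.single j (1 : ZMod 2))) ^ (c.val : ℤ) := by
      rfl
    rw [this, ← ofAdd_zsmul]
    rcases hc with rfl | rfl
    · show Multiplicative.ofAdd (((0 : ZMod 2).val : ℤ) • _) = _
      rw [show ((0 : ZMod 2)).val = 0 from rfl]
      rw [Nat.cast_zero, zero_smul, Finsupp.single_zero]
    · show Multiplicative.ofAdd (((1 : ZMod 2).val : ℤ) • _) = _
      rw [show ((1 : ZMod 2)).val = 1 from rfl]
      rw [Nat.cast_one, one_smul]
  · show (1 : Multiplicative ℤ) ^ (c.val : ℤ) = 1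
    exact one_zpow _

lemma phi_comp_psi [NeZero n] :
    (Abelianization.lift (phi n)).comp (psi n) = MonoidHom.id _ := by
  have hn : (n : ℤ) ≠ 0 := by exact_mod_cast NeZero.ne n
  apply MonoidHom.ext
  rintro ⟨a, t⟩
  have h2 : Abelianization.lift (phi n) (psi2 n t) = (1, t) := by
    rw [psi2, zpowersHom_apply, map_zpow, Abelianization.lift_apply_of]
    have hg : phi n (gEl n) = (1, Multiplicative.ofAdd (1 : ℤ)) := by
      rw [phi_apply]
      refine Prod.ext ?_ ?_
      · show rhom n 1 = 1
        exact map_one _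
      · show Multiplicative.ofAdd
          ((SemidirectProduct.inr (Multiplicative.ofAdd ((n:ℤ))) : Lamplighter).right.toAdd
            / (n : ℤ)) = _
        rw [SemidirectProduct.right_inr, toAdd_ofAdd, Int.ediv_self hn]
    rw [hg]
    refine Prod.ext ?_ ?_
    · show (1 : Multiplicative (ZMod n →₀ ZMod 2)) ^ t.toAdd = 1
      exact one_zpow _
    · show (Multiplicative.ofAdd (1:ℤ)) ^ t.toAdd = t
      rw [← ofAdd_zsmul, smul_eq_mul, mul_one, ofAdd_toAdd]
  have h1 : Abelianization.lift (phi n) (psi1 n a) = (a, 1) :=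
    congrFun (congrArg DFunLike.coe (lift_phi_psi1 n)) a
  show Abelianization.lift (phi n) (psi n (a, t)) = (a, t)
  rw [psi, MonoidHom.coprod_apply, map_mul]
  show Abelianization.lift (phi n) (psi1 n a) * Abelianization.lift (phi n) (psi2 n t) = _
  rw [h2, h1, Prod.mk_mul_mk, mul_one, one_mul]

noncomputable def abEquiv [NeZero n] :
    Abelianization (Hsub n) ≃* Multiplicative (ZMod n →₀ ZMod 2) × Multiplicative ℤ :=
  MonoidHom.toMulEquiv (Abelianization.lift (phi n)) (psi n)
    (by
      apply Abelianization.hom_ext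
      apply MonoidHom.ext
      intro h
      show psi n (Abelianization.lift (phi n) (Abelianization.of h)) = Abelianization.of h
      rw [Abelianization.lift_apply_of]
      exact psi_comp_phi n h)
    (phi_comp_psi n)

lemma mult_sq (a : ZMod n →₀ ZMod 2) :
    (Multiplicative.ofAdd a) ^ 2 = (1 : Multiplicative (ZMod n →₀ ZMod 2)) := by
  rw [← ofAdd_nsmul, two_nsmul]
  have : a + a = 0 := by
    ext k
    exact CharTwo.add_self_eq_zero _
  rw [this, ofAdd_zero]

set_option maxHeartbeats 1000000 in
noncomputable def torsionEquiv [NeZero n] :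
    CommGroup.torsion (Abelianization (Hsub n)) ≃ (ZMod n →₀ ZMod 2) where
  toFun x := ((abEquiv n x.1).1).toAdd
  invFun a := ⟨(abEquiv n).symm (Multiplicative.ofAdd a, 1), by
    rw [CommGroup.mem_torsion, isOfFinOrder_iff_pow_eq_one]
    refine ⟨2, by norm_num, ?_⟩
    rw [← map_pow]
    have hp : ((Multiplicative.ofAdd a, 1) :
        Multiplicative (ZMod n →₀ ZMod 2) × Multiplicative ℤ) ^ 2 = 1 := by
      refine Prod.ext ?_ ?_
      · show (Multiplicative.ofAdd a) ^ 2 = 1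
        exact mult_sq n a
      · show (1 : Multiplicative ℤ) ^ 2 = 1
        exact one_pow _
    rw [hp, map_one]⟩
  left_inv := by
    rintro ⟨x, hx⟩
    obtain ⟨m, hm, hpow⟩ := isOfFinOrder_iff_pow_eq_one.mp hx
    have hxm : ((abEquiv n) x) ^ m = 1 := by rw [← map_pow, hpow, map_one]
    have h2 : ((abEquiv n) x).2 = 1 := by
      have hsnd : (((abEquiv n) x).2) ^ m = 1 := by
        have : (((abEquiv n) x) ^ m).2 = (1 : Multiplicative ℤ) := by rw [hxm]; rfl
        exact this
      have hz : m • (((abEquiv n) x).2).toAdd = 0 := by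
        rw [← toAdd_pow, hsnd, toAdd_one]
      have hz' : ((m : ℤ)) * (((abEquiv n) x).2).toAdd = 0 := by
        rw [← smul_eq_mul, natCast_zsmul]
        exact hz
      rcases mul_eq_zero.mp hz' with h | h
      · exact absurd (by exact_mod_cast h : m = 0) hm.ne'
      · have : (((abEquiv n) x).2).toAdd = 0 := h
        calc ((abEquiv n) x).2 = Multiplicative.ofAdd ((((abEquiv n) x).2).toAdd) := rfl
          _ = Multiplicative.ofAdd 0 := by rw [this]
          _ = 1 := ofAdd_zero
    apply Subtype.ext
    show (abEquiv n).symm (Multiplicative.ofAdd (((abEquiv n) x).1).toAdd, 1) = x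
    rw [ofAdd_toAdd, ← h2]
    exact (abEquiv n).symm_apply_apply x
  right_inv := by
    intro a
    show (((abEquiv n) ((abEquiv n).symm (Multiplicative.ofAdd a, 1))).1).toAdd = a
    rw [(abEquiv n).apply_symm_apply]
    rfl


theorem stmt_12 (n : ℕ) (hn : 1 ≤ n) :
    Nat.card (CommGroup.torsion (Abelianization (Hsub n))) = 2 ^ n := by
  have : NeZero n := ⟨by omega⟩
  rw [Nat.card_congr (torsionEquiv n), Nat.card_congr (Finsupp.equivFunOnFinite),
    Nat.card_fun, Nat.card_zmod, Nat.card_zmod]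

end Stmt12
end

section
/- Let H be a finitely generated nilpotent group of class at most 2 and L a subgroup of finite index in H. Then the derived subgroup L' has finite index in H'. -/
open scoped commutatorElement
open scoped IsMulCommutative

section Aux

variable {G : Type*} [Group G]

lemma aux_comm_mul_left (hc : ∀ a b c : G, Commute ⁅a, b⁆ c) (a b c : G) :
    ⁅a * b, c⁆ = ⁅a, c⁆ * ⁅b, c⁆ := by
  calc ⁅a * b, c⁆ = a * ⁅b, c⁆ * a⁻¹ * ⁅a, c⁆ := by
        simp only [commutatorElement_def]; group
    _ = ⁅b, c⁆ * ⁅a, c⁆ := by rw [(hc b c a).symm.eq]; group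
    _ = ⁅a, c⁆ * ⁅b, c⁆ := (hc b c ⁅a, c⁆).eq

lemma aux_comm_inv_left (hc : ∀ a b c : G, Commute ⁅a, b⁆ c) (a c : G) :
    ⁅a⁻¹, c⁆ = ⁅a, c⁆⁻¹ := by
  calc ⁅a⁻¹, c⁆ = a⁻¹ * ⁅a, c⁆⁻¹ * a := by
        simp only [commutatorElement_def]; group
    _ = ⁅a, c⁆⁻¹ := by rw [← ((hc a c a⁻¹).inv_left).eq]; group

lemma aux_comm_mul_right (hc : ∀ a b c : G, Commute ⁅a, b⁆ c) (a b c : G) :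
    ⁅a, b * c⁆ = ⁅a, b⁆ * ⁅a, c⁆ := by
  rw [← commutatorElement_inv, aux_comm_mul_left hc, mul_inv_rev,
    commutatorElement_inv, commutatorElement_inv]
  exact (hc a c ⁅a, b⁆).eq

lemma aux_comm_inv_right (hc : ∀ a b c : G, Commute ⁅a, b⁆ c) (a c : G) :
    ⁅a, c⁻¹⁆ = ⁅a, c⁆⁻¹ := by
  rw [← commutatorElement_inv, aux_comm_inv_left hc, commutatorElement_inv]

lemma aux_comm_pow_left (hc : ∀ a b c : G, Commute ⁅a, b⁆ c) (a c : G) (n : ℕ) :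
    ⁅a ^ n, c⁆ = ⁅a, c⁆ ^ n := by
  induction n with
  | zero => simp
  | succ n ih => rw [pow_succ, aux_comm_mul_left hc, ih, pow_succ]

lemma aux_comm_pow_right (hc : ∀ a b c : G, Commute ⁅a, b⁆ c) (a c : G) (n : ℕ) :
    ⁅a, c ^ n⁆ = ⁅a, c⁆ ^ n := by
  induction n with
  | zero => simp
  | succ n ih => rw [pow_succ, aux_comm_mul_right hc, ih, pow_succ]

end Aux

theorem stmt_15 (H : Type*) [Group H] [Group.FG H]
    (hnil : ⁅⁅(⊤ : Subgroup H), (⊤ : Subgroup H)⁆, (⊤ : Subgroup H)⁆ = ⊥)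
    (L : Subgroup H) (hL : L.index ≠ 0) :
    ⁅L, L⁆.relIndex ⁅(⊤ : Subgroup H), (⊤ : Subgroup H)⁆ ≠ 0 := by
  -- commutators are central
  have hc : ∀ a b c : H, Commute ⁅a, b⁆ c := by
    intro a b c
    have h : ⁅⁅a, b⁆, c⁆ ∈ (⊥ : Subgroup H) := by
      rw [← hnil]
      exact Subgroup.commutator_mem_commutator
        (Subgroup.commutator_mem_commutator (Subgroup.mem_top a) (Subgroup.mem_top b))
        (Subgroup.mem_top c)
    rw [Subgroup.mem_bot, commutatorElement_eq_one_iff_commute] at h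
    exact h
  have hcenter : ⁅(⊤ : Subgroup H), (⊤ : Subgroup H)⁆ ≤ Subgroup.center H := by
    have h := Subgroup.commutator_eq_bot_iff_le_centralizer.mp hnil
    rwa [Subgroup.coe_top, Subgroup.centralizer_univ] at h
  haveI : L.FiniteIndex := ⟨hL⟩
  set N : Subgroup H := L.normalCore with hN
  haveI : N.Normal := L.normalCore_normal
  haveI : N.FiniteIndex := Subgroup.finiteIndex_normalCore L
  set m : ℕ := N.index with hm
  have hm0 : m ≠ 0 := Subgroup.FiniteIndex.index_ne_zero
  -- generators of H
  obtain ⟨S, hS, hSfin⟩ := Group.fg_iff.mp (inferInstance : Group.FG H)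
  set T : Set H := (fun p : H × H => ⁅p.1, p.2⁆) '' (S ×ˢ S) with hT
  have hTfin : T.Finite := (hSfin.prod hSfin).image _
  -- the commutator subgroup equals the closure of T
  have hTle : Subgroup.closure T ≤ ⁅(⊤ : Subgroup H), (⊤ : Subgroup H)⁆ := by
    rw [Subgroup.closure_le]
    rintro x ⟨⟨s, t⟩, _, rfl⟩
    exact Subgroup.commutator_mem_commutator (Subgroup.mem_top s) (Subgroup.mem_top t)
  have step1 : ∀ t ∈ S, ∀ a : H, ⁅a, t⁆ ∈ Subgroup.closure T := by
    intro t ht a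
    have ha : a ∈ Subgroup.closure S := hS ▸ Subgroup.mem_top a
    induction ha using Subgroup.closure_induction with
    | mem x hx => exact Subgroup.subset_closure ⟨(x, t), ⟨hx, ht⟩, rfl⟩
    | one => simpa using one_mem (Subgroup.closure T)
    | mul x y hx hy ihx ihy => rw [aux_comm_mul_left hc]; exact mul_mem ihx ihy
    | inv x hx ihx => rw [aux_comm_inv_left hc]; exact inv_mem ihx
  have step2 : ∀ a b : H, ⁅a, b⁆ ∈ Subgroup.closure T := by
    intro a b
    have hb : b ∈ Subgroup.closure S := hS ▸ Subgroup.mem_top b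
    induction hb using Subgroup.closure_induction with
    | mem x hx => exact step1 x hx a
    | one => simpa using one_mem (Subgroup.closure T)
    | mul x y hx hy ihx ihy => rw [aux_comm_mul_right hc]; exact mul_mem ihx ihy
    | inv x hx ihx => rw [aux_comm_inv_right hc]; exact inv_mem ihx
  have hK : ⁅(⊤ : Subgroup H), (⊤ : Subgroup H)⁆ = Subgroup.closure T :=
    le_antisymm (Subgroup.commutator_le.mpr fun a _ b _ => step2 a b) hTle
  -- generators are torsion modulo ⁅N, N⁆
  have hpow : ∀ x ∈ T, x ^ (m * m) ∈ ⁅N, N⁆ := by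
    rintro x ⟨⟨s, t⟩, _, rfl⟩
    have hpe : ⁅s, t⁆ ^ (m * m) = ⁅s ^ m, t ^ m⁆ := by
      rw [aux_comm_pow_left hc, aux_comm_pow_right hc, ← pow_mul]
    rw [hpe]
    exact Subgroup.commutator_mem_commutator (N.pow_index_mem s) (N.pow_index_mem t)
  set K : Subgroup H := ⁅(⊤ : Subgroup H), (⊤ : Subgroup H)⁆ with hKdef
  have hML : ⁅N, N⁆ ≤ ⁅L, L⁆ := Subgroup.commutator_mono L.normalCore_le L.normalCore_le
  -- K is commutative
  haveI hKcomm : IsMulCommutative K := by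
    constructor
    constructor
    intro a b
    exact Subtype.ext (Subgroup.mem_center_iff.mp (hcenter b.2) a.1)
  haveI : (⁅N, N⁆ : Subgroup H).Normal := Subgroup.commutator_normal N N
  set M : Subgroup K := (⁅N, N⁆ : Subgroup H).subgroupOf K with hM
  haveI : M.Normal := Subgroup.normal_subgroupOf
  -- K is finitely generated
  have hKfg : K.FG := (Subgroup.fg_iff K).mpr ⟨T, hK.symm, hTfin⟩
  haveI : Group.FG K := (Group.fg_iff_subgroup_fg K).mpr hKfg
  haveI : Group.FG (K ⧸ M) := Group.fg_of_surjective (QuotientGroup.mk'_surjective M)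
  -- the quotient is torsion
  have htor : Monoid.IsTorsion (K ⧸ M) := by
    have hPtop : ∀ y : K, y ∈ (CommGroup.torsion (K ⧸ M)).comap (QuotientGroup.mk' M) := by
      intro y
      have hy1 : (y : H) ∈ Subgroup.closure T := hK ▸ y.2
      revert y
      suffices h : ∀ (x : H), x ∈ Subgroup.closure T → ∀ (hx : x ∈ K),
          (⟨x, hx⟩ : K) ∈ (CommGroup.torsion (K ⧸ M)).comap (QuotientGroup.mk' M) by
        intro y hy1
        have := h y.1 hy1 y.2
        simpa using this
      intro x hx
      induction hx using Subgroup.closure_induction with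
      | mem x hxT =>
        intro hxK
        rw [Subgroup.mem_comap]
        rw [CommGroup.mem_torsion]
        rw [isOfFinOrder_iff_pow_eq_one]
        refine ⟨m * m, Nat.pos_of_ne_zero (Nat.mul_ne_zero hm0 hm0), ?_⟩
        rw [← map_pow, QuotientGroup.mk'_apply, QuotientGroup.eq_one_iff]
        rw [hM, Subgroup.mem_subgroupOf]
        simpa using hpow x hxT
      | one =>
        intro h
        have he : (⟨1, h⟩ : K) = 1 := rfl
        rw [he]
        exact one_mem _
      | mul x y hxT hyT ihx ihy =>
        intro h
        have hxK : x ∈ K := hK.ge hxT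
        have hyK : y ∈ K := hK.ge hyT
        have he : (⟨x * y, h⟩ : K) = ⟨x, hxK⟩ * ⟨y, hyK⟩ := rfl
        rw [he]
        exact mul_mem (ihx hxK) (ihy hyK)
      | inv x hxT ihx =>
        intro h
        have hxK : x ∈ K := hK.ge hxT
        have he : (⟨x⁻¹, h⟩ : K) = (⟨x, hxK⟩)⁻¹ := rfl
        rw [he]
        exact inv_mem (ihx hxK)
    intro q
    obtain ⟨y, rfl⟩ := QuotientGroup.mk'_surjective M q
    exact (CommGroup.mem_torsion _).mp (Subgroup.mem_comap.mp (hPtop y))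
  haveI : Finite (K ⧸ M) := CommGroup.finite_of_fg_torsion _ htor
  have hrel : (⁅N, N⁆ : Subgroup H).relIndex K ≠ 0 := by
    rw [Subgroup.relIndex, ← hM]
    exact Subgroup.index_ne_zero_of_finite
  intro h0
  exact hrel (Subgroup.relIndex_eq_zero_of_le_left hML h0)
end
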